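/- arXiv:1904.00175 — 2 statements merged into one kernel-verified Lean document; each statement's English description precedes it below -/
import Mathlib

section
/- Let X be a projective K3 surface over an algebraically closed field of characteristic ≠ 2,3, C a smooth rational curve on X, and P ∈ C a point such that Dec(X,C,P) = {f ∈ Aut(X) : f(C) = C, f(P) = P} is not almost abelian. Then the inertia group Ine(C) = {f ∈ Aut(X) : f|_C = id_C} contains a subgroup isomorphic to ℤ * ℤ. -/
/-!
STATEMENT 12: Let `X` be a projective K3 surface over an algebraically closed field
of characteristic `≠ 2,3`, `C` a smooth rational curve on `X`, and `P ∈ C` a point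
such that `Dec(X,C,P) = {f ∈ Aut(X) : f(C) = C, f(P) = P}` is not almost abelian.
Then the inertia group `Ine(C) = {f ∈ Aut(X) : f|_C = id_C}` contains a subgroup
isomorphic to `ℤ * ℤ` (the free group on two generators).

Abstract setting (per the context): `Aut` is the automorphism group of `X`;
`DecP = Dec(X,C,P)` and `Ine = Ine(C)` are subgroups; restriction to `C` gives a
homomorphism `ρ : DecP → Aut(C,P)` into the solvable group `Aut(C,P) ≅ {z ↦ az+b}`
whose kernel is contained in `Ine`;  the Tits alternative for K3 automorphism
groups (fact (a)) is a hypothesis.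
-/

/-- `G` is almost abelian. -/
def IsAlmostAbelian (G : Type*) [Group G] : Prop :=
  ∃ G0 : Subgroup G, G0.Normal ∧ G0.FiniteIndex ∧
    ∃ K : Subgroup G0, K.Normal ∧ Finite K ∧ ∀ a b : G0, a * b * a⁻¹ * b⁻¹ ∈ K

/-- The free group on two generators is not solvable, since it surjects onto the
(nonsolvable) symmetric group on 5 letters. -/
lemma freeGroup_fin_two_not_solvable : ¬ Group.IsSolvable (FreeGroup (Fin 2)) := by
  intro h
  set σ : Equiv.Perm (Fin 5) := finRotate 5 with hσ
  have h1 : σ.IsCycle := isCycle_finRotate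
  have h2 : σ.support = Finset.univ := support_finRotate
  have hclos := Equiv.Perm.closure_cycle_adjacent_swap h1 h2 (0 : Fin 5)
  set f : Fin 2 → Equiv.Perm (Fin 5) := ![σ, Equiv.swap 0 (σ 0)] with hf
  have hrange : Set.range f = {σ, Equiv.swap 0 (σ 0)} := by
    ext x
    constructor
    · rintro ⟨i, rfl⟩
      fin_cases i <;> simp [hf]
    · rintro (rfl | rfl)
      · exact ⟨0, rfl⟩
      · exact ⟨1, rfl⟩
  have hsurj : Function.Surjective (FreeGroup.lift f) := by
    rw [← MonoidHom.range_eq_top, FreeGroup.range_lift_eq_closure, hrange, hclos]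
  exact Equiv.Perm.fin_5_not_solvable (solvable_of_surjective hsurj)

/-- The free group on a subsingleton type is commutative. -/
lemma freeGroup_comm_of_subsingleton {ι : Type*} [Subsingleton ι]
    (x y : FreeGroup ι) : x * y = y * x := by
  have key : ∀ x y : FreeGroup ι, Commute x y := by
    intro x
    induction x using FreeGroup.induction_on with
    | C1 => exact fun y => Commute.one_left y
    | of i =>
      intro y
      induction y using FreeGroup.induction_on with
      | C1 => exact Commute.one_right _
      | of j => rw [Subsingleton.elim i j]
      | inv_of j hj => exact hj.inv_right
      | mul y z hy hz => exact hy.mul_right hz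
    | inv_of i hi => exact fun y => (hi y).inv_left
    | mul x z hx hz => exact fun y => (hx y).mul_left (hz y)
  exact key x y

/-- A nonabelian free group contains a copy of the free group on two generators:
there is an injective homomorphism from `FreeGroup (Fin 2)`. -/
lemma exists_injective_freeGroup_fin_two {ι : Type*}
    (h : ∃ u v : FreeGroup ι, u * v ≠ v * u) :
    ∃ ψ : FreeGroup (Fin 2) →* FreeGroup ι, Function.Injective ψ := by
  classical
  obtain ⟨u, v, huv⟩ := h
  -- there are two distinct generators
  have hni : ¬ Subsingleton ι := by
    intro hs
    exact huv (freeGroup_comm_of_subsingleton u v)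
  obtain ⟨i, j, hij⟩ : ∃ i j : ι, i ≠ j := by
    by_contra hc
    push_neg at hc
    exact hni ⟨hc⟩
  set g : Fin 2 → ι := ![i, j] with hg
  set r : ι → Fin 2 := fun x => if x = i then 0 else 1 with hr
  have hrg : r ∘ g = id := by
    funext k
    fin_cases k
    · simp [hg, hr]
    · simp [hg, hr, hij.symm]
  refine ⟨FreeGroup.map g, ?_⟩
  have hleft : ∀ x : FreeGroup (Fin 2), FreeGroup.map r (FreeGroup.map g x) = x := by
    intro x
    rw [FreeGroup.map.comp, hrg, FreeGroup.map.id]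
  intro a b hab
  have := congrArg (FreeGroup.map r) hab
  rwa [hleft, hleft] at this

theorem ine_contains_free_group_of_decP_not_almostAbelian
    -- the automorphism group of the K3 surface `X`
    (Aut : Type*) [Group Aut]
    -- Tits alternative for subgroups of `Aut(X)` (Theorem 3.2 (1))
    (tits : ∀ G : Subgroup Aut, ¬ IsAlmostAbelian G →
      ∃ S : Subgroup G, Nonempty (S ≃* FreeGroup (Fin 2)))
    -- the pointed decomposition group `Dec(X,C,P)` and the inertia group `Ine(C)`
    (DecP Ine : Subgroup Aut)
    -- `Aut(C,P)`, the stabilizer of `P` in `Aut(C) = PGL₂`, a solvable group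
    (AutCP : Type*) [Group AutCP] [Group.IsSolvable AutCP]
    -- the restriction homomorphism `f ↦ f|_C`
    (ρ : DecP →* AutCP)
    -- the kernel of the restriction lies in the inertia group `Ine(C)`
    (hker : ∀ f : DecP, f ∈ ρ.ker → (f : Aut) ∈ Ine)
    -- hypothesis: `Dec(X,C,P)` is not almost abelian
    (hDecP : ¬ IsAlmostAbelian DecP) :
    ∃ S : Subgroup Aut, S ≤ Ine ∧ Nonempty (S ≃* FreeGroup (Fin 2)) := by
  -- Tits alternative gives a free subgroup `S₀ ≤ DecP`
  obtain ⟨S₀, ⟨e⟩⟩ := tits DecP hDecP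
  -- the induced map `F₂ → AutCP`
  set φ : FreeGroup (Fin 2) →* AutCP :=
    ρ.comp (S₀.subtype.comp e.symm.toMonoidHom) with hφ
  set K : Subgroup (FreeGroup (Fin 2)) := φ.ker with hK
  -- the kernel `K` is nonabelian: otherwise `F₂` would be solvable
  have hKna : ∃ u v : K, u * v ≠ v * u := by
    by_contra hc
    push_neg at hc
    have hKsolv : Group.IsSolvable K := isSolvable_of_comm hc
    have : Group.IsSolvable (FreeGroup (Fin 2)) := by
      refine solvable_of_ker_le_range K.subtype φ ?_
      intro x hx
      exact ⟨⟨x, hx⟩, rfl⟩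
    exact freeGroup_fin_two_not_solvable this
  -- `K` is free by Nielsen–Schreier; being nonabelian it contains a copy of `F₂`
  have : IsFreeGroup K := inferInstance
  set θ : FreeGroup (IsFreeGroup.Generators K) ≃* K := IsFreeGroup.mulEquiv _ with hθ
  have hna' : ∃ u v : FreeGroup (IsFreeGroup.Generators K), u * v ≠ v * u := by
    obtain ⟨u, v, huv⟩ := hKna
    refine ⟨θ.symm u, θ.symm v, fun hcomm => huv ?_⟩
    have := congrArg θ hcomm
    simpa using this
  obtain ⟨ψ₀, hψ₀⟩ := exists_injective_freeGroup_fin_two hna'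
  -- assemble the injective homomorphism `F₂ → Aut` landing in `Ine`
  set ψ : FreeGroup (Fin 2) →* Aut :=
    (DecP.subtype.comp (S₀.subtype.comp e.symm.toMonoidHom)).comp
      ((K.subtype.comp θ.toMonoidHom).comp ψ₀) with hψ
  have hinj : Function.Injective ψ := by
    intro a b hab
    simp only [hψ, MonoidHom.comp_apply, MulEquiv.coe_toMonoidHom] at hab
    exact hψ₀ (θ.injective (K.subtype_injective (e.symm.injective
      (S₀.subtype_injective (DecP.subtype_injective hab)))))
  refine ⟨ψ.range, ?_, ⟨(MonoidHom.ofInjective hinj).symm⟩⟩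
  rintro x ⟨y, rfl⟩
  -- the image of any element of `K` lies in `Ine`
  set k : FreeGroup (Fin 2) := (K.subtype (θ (ψ₀ y)) : FreeGroup (Fin 2)) with hk
  have hkK : k ∈ K := (θ (ψ₀ y)).2
  have hmem : S₀.subtype (e.symm k) ∈ ρ.ker := by
    have : φ k = 1 := hkK
    simpa [hφ, MonoidHom.mem_ker] using this
  have := hker _ hmem
  simpa [hψ, hk] using this
end

section
/- Let X be a smooth complex projective surface and f ∈ Aut(X) an automorphism of positive entropy. If D is a nonzero effective divisor class with f*D = D in NS(X), then D² < 0. -/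
/-!
STATEMENT 16: Let `X` be a smooth complex projective surface and `f ∈ Aut(X)` an
automorphism of positive entropy.  If `D` is a nonzero effective divisor class with
`f^*D = D` in `NS(X)`, then `D² < 0`.

Abstract setting: `NS(X) ⊗ ℝ = ℝ^n` with the intersection form given by a symmetric
matrix `Q` of signature `(1, n-1)` (Hodge index theorem); `f^*` is an isometry `A`;
positive entropy means the spectral radius of `A` exceeds `1`, i.e. `A` has a
(complex) eigenvalue of modulus `> 1`; `h` is an ample class (`h² > 0`), and the
nonzero effective class `D` satisfies `D·h > 0`.
-/

open Matrix


lemma form_change {R : Type*} [CommRing R] (n : ℕ) (P M : Matrix (Fin n) (Fin n) R)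
    (d c : Fin n → R) :
    (P.mulVec d) ⬝ᵥ M.mulVec (P.mulVec c) = d ⬝ᵥ (Pᵀ*M*P).mulVec c := by
  rw [Matrix.mul_assoc, ← Matrix.mulVec_mulVec, Matrix.dotProduct_mulVec d,
    Matrix.vecMul_transpose, Matrix.mulVec_mulVec]

lemma symm_form (n : ℕ) (Q : Matrix (Fin n) (Fin n) ℝ) (hsymm : Q.IsSymm)
    (a b : Fin n → ℝ) : a ⬝ᵥ Q.mulVec b = b ⬝ᵥ Q.mulVec a := by
  rw [Matrix.dotProduct_mulVec a, ← Matrix.mulVec_transpose, hsymm.eq, dotProduct_comm]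

lemma emb_form (n : ℕ) (Q : Matrix (Fin n) (Fin n) ℝ) (u w : Fin n → ℝ) :
    (fun i => ((u i : ℂ))) ⬝ᵥ (Q.map Complex.ofReal).mulVec (fun i => ((w i : ℂ)))
      = ((u ⬝ᵥ Q.mulVec w : ℝ) : ℂ) := by
  simp [Matrix.mulVec, dotProduct, Matrix.map_apply]

lemma emb_mulVec (n : ℕ) (A : Matrix (Fin n) (Fin n) ℝ) (u : Fin n → ℝ) :
    (A.map Complex.ofReal).mulVec (fun i => ((u i : ℂ))) = fun i => (((A.mulVec u) i : ℝ) : ℂ) := by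
  funext i
  simp [Matrix.mulVec, dotProduct, Matrix.map_apply]

lemma vec_decomp (n : ℕ) (v : Fin n → ℂ) :
    v = (fun i => ((v i).re : ℂ)) + Complex.I • (fun i => ((v i).im : ℂ)) := by
  funext i
  show v i = ((v i).re : ℂ) + Complex.I * ((v i).im : ℂ)
  rw [mul_comm]
  exact (Complex.re_add_im (v i)).symm

lemma starVec_map (n : ℕ) (A : Matrix (Fin n) (Fin n) ℝ) (v : Fin n → ℂ) :
    (A.map Complex.ofReal).mulVec (star v) = star ((A.map Complex.ofReal).mulVec v) := by
  funext i
  simp [Matrix.mulVec, dotProduct, Matrix.map_apply, Pi.star_apply, star_sum]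

lemma expand_form (n : ℕ) (Q : Matrix (Fin n) (Fin n) ℝ) (a b : Fin n → ℂ) :
    a ⬝ᵥ (Q.map Complex.ofReal).mulVec b =
      ((((fun i => (a i).re) ⬝ᵥ Q.mulVec (fun i => (b i).re)
          - (fun i => (a i).im) ⬝ᵥ Q.mulVec (fun i => (b i).im) : ℝ)) : ℂ)
      + ((((fun i => (a i).re) ⬝ᵥ Q.mulVec (fun i => (b i).im)
          + (fun i => (a i).im) ⬝ᵥ Q.mulVec (fun i => (b i).re) : ℝ)) : ℂ) * Complex.I := by
  conv_lhs => rw [vec_decomp n a, vec_decomp n b]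
  simp only [Matrix.mulVec_add, Matrix.mulVec_smul, dotProduct_add, add_dotProduct,
    dotProduct_smul, smul_dotProduct, smul_eq_mul]
  rw [emb_form, emb_form, emb_form, emb_form]
  push_cast
  linear_combination (((fun i => (a i).im) ⬝ᵥ Q.mulVec (fun i => (b i).im) : ℝ) : ℂ) * Complex.I_sq


lemma diag_form (n : ℕ) (η : Fin n → ℝ) (a b : Fin n → ℝ) :
    a ⬝ᵥ (Matrix.diagonal η).mulVec b = ∑ i, η i * a i * b i := by
  simp [Matrix.mulVec_diagonal, dotProduct]
  exact Finset.sum_congr rfl fun i _ => by ring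

/-- In Lorentzian signature (1,n-1): a vector with nonneg square orthogonal to a
nonzero null vector is proportional to it. -/
lemma lorentz_prop (n : ℕ) (Q : Matrix (Fin n) (Fin n) ℝ)
    (hsig : ∃ P : Matrix (Fin n) (Fin n) ℝ, IsUnit P.det ∧
      Pᵀ * Q * P = Matrix.diagonal (fun i : Fin n => if (i : ℕ) = 0 then (1 : ℝ) else -1))
    (u w : Fin n → ℝ) (hw : w ≠ 0)
    (hwn : w ⬝ᵥ Q.mulVec w = 0)
    (huu : 0 ≤ u ⬝ᵥ Q.mulVec u)
    (huw : u ⬝ᵥ Q.mulVec w = 0) : ∃ t : ℝ, u = t • w := by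
  obtain ⟨P, hP, hPQP⟩ := hsig
  have hn : 0 < n := by
    rcases Function.ne_iff.1 hw with ⟨i, -⟩
    exact i.pos
  haveI : NeZero n := ⟨hn.ne'⟩
  set η : Fin n → ℝ := fun i => if (i : ℕ) = 0 then (1 : ℝ) else -1 with hη
  set R := P⁻¹ with hR
  set c := R.mulVec w with hc
  set d := R.mulVec u with hd
  have hPR : P * R = 1 := Matrix.mul_nonsing_inv P hP
  have hwc : w = P.mulVec c := by
    rw [hc, Matrix.mulVec_mulVec, hPR, Matrix.one_mulVec]
  have hud : u = P.mulVec d := by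
    rw [hd, Matrix.mulVec_mulVec, hPR, Matrix.one_mulVec]
  -- rewrite the three form conditions in diagonal coordinates
  have key : ∀ a b : Fin n → ℝ,
      (P.mulVec a) ⬝ᵥ Q.mulVec (P.mulVec b) = ∑ i, η i * a i * b i := by
    intro a b
    rw [form_change, hPQP, diag_form]
  rw [hwc] at hwn
  rw [hud] at huu huw
  rw [hwc] at huw
  rw [key] at hwn huu huw
  -- split off the 0-th coordinate
  have hsplit : ∀ a b : Fin n → ℝ,
      ∑ i, η i * a i * b i = a 0 * b 0 - ∑ i ∈ Finset.univ.erase 0, a i * b i := by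
    intro a b
    rw [← Finset.add_sum_erase _ _ (Finset.mem_univ (0 : Fin n))]
    simp only [hη, Fin.val_zero, if_true, one_mul]
    rw [sub_eq_add_neg, ← Finset.sum_neg_distrib]
    congr 1
    refine Finset.sum_congr rfl fun i hi => ?_
    have : (i : ℕ) ≠ 0 := by
      exact fun h => Finset.ne_of_mem_erase hi (Fin.ext (by simp [h]))
    simp [this]
  rw [hsplit] at hwn huu huw
  set E := Finset.univ.erase (0 : Fin n) with hE
  have hb : ∑ i ∈ E, c i * c i = c 0 * c 0 := by linarith
  have ha : ∑ i ∈ E, d i * d i ≤ d 0 * d 0 := by linarith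
  have hp : ∑ i ∈ E, d i * c i = d 0 * c 0 := by linarith
  -- sum of squares ≤ 0
  have hsq : ∑ i ∈ E, (c 0 * d i - d 0 * c i)^2 ≤ 0 := by
    have expand : ∑ i ∈ E, (c 0 * d i - d 0 * c i)^2
        = c 0 * c 0 * (∑ i ∈ E, d i * d i) - 2 * (c 0 * d 0) * (∑ i ∈ E, d i * c i)
          + d 0 * d 0 * (∑ i ∈ E, c i * c i) := by
      rw [Finset.mul_sum, Finset.mul_sum, Finset.mul_sum, ← Finset.sum_sub_distrib,
        ← Finset.sum_add_distrib]
      exact Finset.sum_congr rfl fun i _ => by ring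
    rw [expand, hb, hp]
    nlinarith [sq_nonneg (c 0), sq_nonneg (d 0)]
  have hzero : ∀ i ∈ E, c 0 * d i - d 0 * c i = 0 := by
    intro i hi
    have h1 : ∀ i ∈ E, (0:ℝ) ≤ (c 0 * d i - d 0 * c i)^2 := fun _ _ => sq_nonneg _
    have := (Finset.sum_eq_zero_iff_of_nonneg h1).1 (le_antisymm hsq (Finset.sum_nonneg h1)) i hi
    exact pow_eq_zero_iff (n := 2) (by norm_num) |>.1 this
  have hc0 : c 0 ≠ 0 := by
    intro h0
    apply hw
    have hcz : c = 0 := by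
      funext i
      by_cases hi : i = 0
      · rw [hi, h0]; rfl
      · have hiE : i ∈ E := Finset.mem_erase.2 ⟨hi, Finset.mem_univ i⟩
        have hEnn : ∀ j ∈ E, (0:ℝ) ≤ c j * c j := fun j _ => mul_self_nonneg _
        have : ∑ i ∈ E, c i * c i = 0 := by rw [hb, h0]; ring
        have := (Finset.sum_eq_zero_iff_of_nonneg hEnn).1 this i hiE
        have := mul_self_eq_zero.1 this
        exact this
    rw [hwc, hcz, Matrix.mulVec_zero]
  -- d = (d 0 / c 0) • c
  obtain ⟨t, hdc⟩ : ∃ t : ℝ, d = t • c := by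
    refine ⟨d 0 / c 0, ?_⟩
    funext i
    by_cases hi : i = 0
    · subst hi; rw [Pi.smul_apply, smul_eq_mul, div_mul_cancel₀ _ hc0]
    · have := hzero i (Finset.mem_erase.2 ⟨hi, Finset.mem_univ i⟩)
      have : c 0 * d i = d 0 * c i := by linarith
      show d i = (d 0 / c 0) * c i
      field_simp
      linarith
  exact ⟨t, by rw [hud, hwc, hdc, Matrix.mulVec_smul]⟩
theorem negative_square_of_invariant_effective_class
    (n : ℕ) (Q : Matrix (Fin n) (Fin n) ℝ)
    (hsymm : Q.IsSymm)
    -- Hodge index: the intersection form has signature `(1, n-1)`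
    (hsig : ∃ P : Matrix (Fin n) (Fin n) ℝ, IsUnit P.det ∧
      Pᵀ * Q * P = Matrix.diagonal (fun i : Fin n => if (i : ℕ) = 0 then (1 : ℝ) else -1))
    -- `A = f^*` is an isometry of `NS(X) ⊗ ℝ`
    (A : Matrix (Fin n) (Fin n) ℝ) (hA : IsUnit A.det)
    (hisom : Aᵀ * Q * A = Q)
    -- `f` has positive entropy: the spectral radius of `f^*` exceeds `1`
    (hentropy : ∃ μ : ℂ, 1 < ‖μ‖ ∧
      Module.End.HasEigenvalue (Matrix.toLin' (A.map Complex.ofReal)) μ)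
    -- an ample class `h`
    (h : Fin n → ℝ) (hample : 0 < h ⬝ᵥ Q.mulVec h)
    -- `D` is a nonzero effective class fixed by `f^*`
    (D : Fin n → ℝ) (hD : D ≠ 0)
    (heff : 0 < D ⬝ᵥ Q.mulVec h)
    (hfix : A.mulVec D = D) :
    D ⬝ᵥ Q.mulVec D < 0 := by
  by_contra hcon
  push_neg at hcon
  obtain ⟨μ, hμ, heig⟩ := hentropy
  obtain ⟨v, hv⟩ := heig.exists_hasEigenvector
  have hvne : v ≠ 0 := hv.right
  have hveq : (A.map Complex.ofReal).mulVec v = μ • v := by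
    have := hv.apply_eq_smul
    rwa [Matrix.toLin'_apply] at this
  set Ac := A.map Complex.ofReal with hAc
  set Qc := Q.map Complex.ofReal with hQc
  -- complexified isometry
  have hisomc : Acᵀ * Qc * Ac = Qc := by
    have h1 := congrArg (fun M : Matrix (Fin n) (Fin n) ℝ =>
      M.map (Complex.ofRealHom : ℝ →+* ℂ)) hisom
    simp only [Matrix.map_mul, Matrix.transpose_map] at h1
    have h2 : ⇑Complex.ofRealHom = Complex.ofReal := rfl
    simpa [Matrix.map_mul, Matrix.transpose_map, hAc, hQc, Complex.coe_algebraMap, h2] using h1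
  have hinv : ∀ a b : Fin n → ℂ,
      (Ac.mulVec a) ⬝ᵥ Qc.mulVec (Ac.mulVec b) = a ⬝ᵥ Qc.mulVec b := by
    intro a b
    rw [form_change, hisomc]
  have hμne1 : μ ≠ 1 := by
    intro hc; rw [hc, norm_one] at hμ; exact lt_irrefl _ hμ
  -- `q_ℂ(v,v) = 0`
  have hvv : v ⬝ᵥ Qc.mulVec v = 0 := by
    have h1 := hinv v v
    rw [hveq] at h1
    simp only [smul_dotProduct, Matrix.mulVec_smul, dotProduct_smul, smul_eq_mul] at h1
    have hμ2 : μ * μ ≠ 1 := by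
      intro hc
      have : (1:ℝ) < ‖μ * μ‖ := by
        rw [norm_mul]; nlinarith
      rw [hc, norm_one] at this; exact lt_irrefl _ this
    have h2 : (μ * μ - 1) * (v ⬝ᵥ Qc.mulVec v) = 0 := by linear_combination h1
    rcases mul_eq_zero.1 h2 with h3 | h3
    · exact absurd (by linear_combination h3) hμ2
    · exact h3
  -- `q_ℂ(v̄,v) = 0`
  have hsvv : (star v) ⬝ᵥ Qc.mulVec v = 0 := by
    have hstar : Ac.mulVec (star v) = (starRingEnd ℂ μ) • star v := by
      rw [hAc, starVec_map, ← hAc, hveq, star_smul]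
      rfl
    have h1 := hinv (star v) v
    rw [hveq, hstar] at h1
    simp only [smul_dotProduct, Matrix.mulVec_smul, dotProduct_smul, smul_eq_mul] at h1
    have hμ2 : (starRingEnd ℂ μ) * μ ≠ 1 := by
      intro hc
      have : (1:ℝ) < ‖(starRingEnd ℂ μ) * μ‖ := by
        rw [norm_mul, Complex.norm_conj]; nlinarith
      rw [hc, norm_one] at this; exact lt_irrefl _ this
    have h2 : ((starRingEnd ℂ μ) * μ - 1) * ((star v) ⬝ᵥ Qc.mulVec v) = 0 := by
      linear_combination h1
    rcases mul_eq_zero.1 h2 with h3 | h3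
    · exact absurd (by linear_combination h3) hμ2
    · exact h3
  -- `q_ℂ(D,v) = 0`
  set Dc : Fin n → ℂ := fun i => ((D i : ℂ)) with hDc
  have hfixc : Ac.mulVec Dc = Dc := by
    rw [hAc, hDc, emb_mulVec, hfix]
  have hDv : Dc ⬝ᵥ Qc.mulVec v = 0 := by
    have h1 := hinv Dc v
    rw [hveq, hfixc] at h1
    simp only [Matrix.mulVec_smul, dotProduct_smul, smul_eq_mul] at h1
    have h2 : (μ - 1) * (Dc ⬝ᵥ Qc.mulVec v) = 0 := by linear_combination h1
    rcases mul_eq_zero.1 h2 with h3 | h3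
    · exact absurd (by linear_combination h3) hμne1
    · exact h3
  -- real and imaginary parts
  set x : Fin n → ℝ := fun i => (v i).re with hx
  set y : Fin n → ℝ := fun i => (v i).im with hy
  have hrel1 := expand_form n Q v v
  rw [hvv] at hrel1
  have hrel2 := expand_form n Q (star v) v
  rw [hsvv] at hrel2
  have hrel3 := expand_form n Q Dc v
  rw [hDv] at hrel3
  have hstar_re : (fun i => ((star v) i).re) = x := by funext i; simp [hx]
  have hstar_im : (fun i => ((star v) i).im) = -y := by funext i; simp [hy]
  have hD_re : (fun i => (Dc i).re) = D := by funext i; simp [hDc]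
  have hD_im : (fun i => (Dc i).im) = (0 : Fin n → ℝ) := by funext i; simp [hDc]
  rw [hstar_re, hstar_im] at hrel2
  rw [hD_re, hD_im] at hrel3
  simp only [← hx, ← hy, zero_dotProduct, neg_dotProduct, add_zero, zero_add,
    sub_neg_eq_add, neg_neg, sub_zero] at hrel1 hrel2 hrel3
  -- extract the real relations
  have ext0 : ∀ r s : ℝ, (0 : ℂ) = (r : ℂ) + (s : ℂ) * Complex.I → r = 0 ∧ s = 0 := by
    intro r s hrs
    have hre := congrArg Complex.re hrs
    have him := congrArg Complex.im hrs
    simp at hre him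
    exact ⟨hre.symm, him.symm⟩
  obtain ⟨e1, e2⟩ := ext0 _ _ hrel1
  obtain ⟨e3, e4⟩ := ext0 _ _ hrel2
  obtain ⟨e5, e6⟩ := ext0 _ _ hrel3
  have hyx : y ⬝ᵥ Q.mulVec x = x ⬝ᵥ Q.mulVec y := symm_form n Q hsymm y x
  have hxx : x ⬝ᵥ Q.mulVec x = 0 := by linarith
  have hyy : y ⬝ᵥ Q.mulVec y = 0 := by linarith
  have hxy : x ⬝ᵥ Q.mulVec y = 0 := by linarith
  have hDx : D ⬝ᵥ Q.mulVec x = 0 := e5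
  have hDy : D ⬝ᵥ Q.mulVec y = 0 := e6
  -- deduce that A fixes x and y, hence v, hence μ = 1
  have hmain : A.mulVec x = x ∧ A.mulVec y = y := by
    by_cases hxz : x = 0
    · have hyz : y ≠ 0 := by
        intro hyz
        apply hvne
        funext i
        have h1 : (v i).re = 0 := congrFun hxz i
        have h2 : (v i).im = 0 := congrFun hyz i
        exact Complex.ext h1 h2
      obtain ⟨t, ht⟩ := lorentz_prop n Q hsig D y hyz hyy hcon hDy
      have htne : t ≠ 0 := by
        intro h0; apply hD; rw [ht, h0, zero_smul]
      have hAy : A.mulVec y = y := by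
        have := hfix
        rw [ht, Matrix.mulVec_smul] at this
        exact smul_right_injective _ htne this
      exact ⟨by rw [hxz, Matrix.mulVec_zero], hAy⟩
    · obtain ⟨t, ht⟩ := lorentz_prop n Q hsig D x hxz hxx hcon hDx
      have htne : t ≠ 0 := by
        intro h0; apply hD; rw [ht, h0, zero_smul]
      have hAx : A.mulVec x = x := by
        have := hfix
        rw [ht, Matrix.mulVec_smul] at this
        exact smul_right_injective _ htne this
      refine ⟨hAx, ?_⟩
      by_cases hyz : y = 0
      · rw [hyz, Matrix.mulVec_zero]
      · have hyx0 : y ⬝ᵥ Q.mulVec x = 0 := by rw [hyx]; exact hxy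
        obtain ⟨s, hs⟩ := lorentz_prop n Q hsig y x hxz hxx (le_of_eq hyy.symm) hyx0
        rw [hs, Matrix.mulVec_smul, hAx]
  -- conclude
  have hvfix : Ac.mulVec v = v := by
    conv_lhs => rw [vec_decomp n v]
    conv_rhs => rw [vec_decomp n v]
    rw [Matrix.mulVec_add, Matrix.mulVec_smul]
    rw [hAc]
    rw [show (fun i => ((v i).re : ℂ)) = (fun i => ((x i : ℝ) : ℂ)) from rfl]
    rw [show (fun i => ((v i).im : ℂ)) = (fun i => ((y i : ℝ) : ℂ)) from rfl]
    rw [emb_mulVec, emb_mulVec, hmain.1, hmain.2]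
  rw [hveq] at hvfix
  have : (μ - 1) • v = 0 := by
    rw [sub_smul, one_smul, hvfix, sub_self]
  rcases smul_eq_zero.1 this with h0 | h0
  · exact hμne1 (by linear_combination h0)
  · exact hvne h0
end
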